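/- Let p, q be coprime positive integers and define γ_n = (1/q)·Σ_{m=0}^{q−1} exp(−2πi·m²·p/q)·cos(2πnm/q) for n ∈ ℤ. Let (A_n)_{n≥1} be a finitely supported sequence of complex numbers and define φ : ℝ → ℂ by φ(x) = Σ_{n≥1} A_n·sin(nπx). Then for every x ∈ ℝ: Σ_{n≥1} exp(−2πi·n²·p/q)·A_n·sin(nπx) = Σ_{n=0}^{q−1} γ_n·φ(x + 2n/q). -/

import Mathlib

open Complex

section FloquetAux
noncomputable def cc : ℂ := 2 * (Real.pi : ℂ) * Complex.I

noncomputable def ff (p q : ℕ) (a : ℤ) : ℂ :=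
  Complex.exp (-cc * (a : ℂ)^2 * (p : ℂ) / (q : ℂ))

lemma ff_even (p q : ℕ) (a : ℤ) : ff p q (-a) = ff p q a := by
  simp [ff]

lemma ff_periodic (p q : ℕ) (hq : 0 < q) {a b : ℤ} (h : (q:ℤ) ∣ a - b) :
    ff p q a = ff p q b := by
  obtain ⟨d, hd⟩ := h
  have hqC : (q:ℂ) ≠ 0 := Nat.cast_ne_zero.mpr hq.ne'
  have ha : (a:ℂ) = (b:ℂ) + (q:ℂ) * (d:ℂ) := by
    push_cast [show a = b + q*d by omega]; ring
  rw [ff, ff, ha]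
  rw [show -cc * ((b:ℂ) + (q:ℂ)*(d:ℂ))^2 * (p:ℂ) / (q:ℂ)
      = -cc * (b:ℂ)^2 * (p:ℂ) / (q:ℂ) + ((-(d * (2*b + q*d) * p) : ℤ) : ℂ) * cc by
    push_cast; field_simp; ring]
  rw [Complex.exp_add, cc, Complex.exp_int_mul_two_pi_mul_I, mul_one]

lemma geom_lemma (q : ℕ) (hq : 0 < q) (r : ℤ) :
    ∑ m ∈ Finset.range q, Complex.exp (cc * (r:ℂ) * (m:ℂ) / (q:ℂ))
      = if (q:ℤ) ∣ r then (q:ℂ) else 0 := by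
  have hqC : (q:ℂ) ≠ 0 := Nat.cast_ne_zero.mpr hq.ne'
  have hz : ∀ m : ℕ, Complex.exp (cc * (r:ℂ) * (m:ℂ) / (q:ℂ))
      = (Complex.exp (cc * (r:ℂ) / (q:ℂ)))^m := by
    intro m
    rw [← Complex.exp_nat_mul]; congr 1; ring
  simp only [hz]
  by_cases h : (q:ℤ) ∣ r
  · obtain ⟨d, hd⟩ := h
    have h1 : Complex.exp (cc * (r:ℂ) / (q:ℂ)) = 1 := by
      rw [show cc * (r:ℂ) / (q:ℂ) = (d : ℂ) * cc by
        rw [hd]; push_cast; field_simp]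
      rw [cc]; exact_mod_cast Complex.exp_int_mul_two_pi_mul_I d
    rw [if_pos (show (q:ℤ) ∣ r from ⟨d, hd⟩)]
    simp [h1]
  · have h1 : Complex.exp (cc * (r:ℂ) / (q:ℂ)) ≠ 1 := by
      intro hcon
      rw [Complex.exp_eq_one_iff] at hcon
      obtain ⟨n, hn⟩ := hcon
      apply h
      refine ⟨n, ?_⟩
      have h2 : cc * (r:ℂ) / (q:ℂ) = (n:ℂ) * cc := by rw [hn, cc]
      have h3 : cc ≠ 0 := by
        rw [cc]
        simp [Real.pi_ne_zero, Complex.I_ne_zero, Complex.ofReal_ne_zero]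
      have h4 : (r:ℂ) = (n:ℂ) * (q:ℂ) := by
        field_simp at h2
        exact mul_left_cancel₀ h3 (by linear_combination cc * h2)
      have h5 : r = n * q := by exact_mod_cast h4
      rw [h5]; ring
    have h2 : (Complex.exp (cc * (r:ℂ) / (q:ℂ)))^q = 1 := by
      rw [← Complex.exp_nat_mul]
      rw [show (q:ℂ) * (cc * (r:ℂ) / (q:ℂ)) = (r:ℂ) * cc by field_simp]
      rw [cc]; exact_mod_cast Complex.exp_int_mul_two_pi_mul_I r
    rw [if_neg h, geom_sum_eq h1, h2]
    simp

lemma pick_lemma (q : ℕ) (hq : 0 < q) (g : ℤ → ℂ)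
    (hg : ∀ a b : ℤ, (q:ℤ) ∣ a - b → g a = g b) (r : ℤ) :
    ∑ k ∈ Finset.range q, g k * (if (q:ℤ) ∣ ((k:ℤ) - r) then (q:ℂ) else 0)
      = (q:ℂ) * g r := by
  have hq' : (0:ℤ) < q := by exact_mod_cast hq
  set k₀ : ℕ := (r % q).toNat with hk₀
  have hmod : ((k₀:ℤ)) = r % q := Int.toNat_of_nonneg (Int.emod_nonneg r hq'.ne')
  have hlt : k₀ < q := by
    have := Int.emod_lt_of_pos r hq'
    omega
  rw [Finset.sum_eq_single_of_mem k₀ (Finset.mem_range.mpr hlt)]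
  · have hdvd : (q:ℤ) ∣ ((k₀:ℤ) - r) := by
      refine ⟨-(r / q), ?_⟩
      have h7 := Int.mul_ediv_add_emod r q
      rw [hmod]; linarith
    rw [if_pos hdvd, hg _ _ hdvd, mul_comm]
  · intro k hk hne
    have hkq : k < q := Finset.mem_range.mp hk
    rw [if_neg, mul_zero]
    intro hdvd
    apply hne
    have hdvd2 : (q:ℤ) ∣ ((k₀:ℤ) - r) := by
      refine ⟨-(r / q), ?_⟩
      have h7 := Int.mul_ediv_add_emod r q
      rw [hmod]; linarith
    have hdvd3 : (q:ℤ) ∣ ((k:ℤ) - (k₀:ℤ)) := by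
      obtain ⟨d, hd⟩ := hdvd
      obtain ⟨e, he⟩ := hdvd2
      exact ⟨d - e, by linarith [hd, he, mul_sub (q:ℤ) d e]⟩
    have hb : ((k:ℤ)) < q := by exact_mod_cast hkq
    have hb2 : ((k₀:ℤ)) < q := by exact_mod_cast hlt
    have hzero : (k:ℤ) - (k₀:ℤ) = 0 :=
      Int.eq_zero_of_abs_lt_dvd hdvd3 (by rw [abs_lt]; omega)
    omega

lemma Clem (p q : ℕ) (hq : 0 < q) (γ : ℤ → ℂ)
    (hγ : ∀ n : ℤ, γ n = (1 / (q : ℂ)) * ∑ m ∈ Finset.range q,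
      Complex.exp (-2 * (Real.pi : ℂ) * Complex.I * (m : ℂ)^2 * (p : ℂ) / (q : ℂ))
        * ((Real.cos (2 * Real.pi * (n : ℝ) * (m : ℝ) / (q : ℝ)) : ℝ) : ℂ))
    (t : ℤ) :
    ∑ m ∈ Finset.range q, γ (m : ℤ) * Complex.exp (cc * (t:ℂ) * (m:ℂ) / (q:ℂ))
      = ff p q t := by
  have hqC : (q:ℂ) ≠ 0 := Nat.cast_ne_zero.mpr hq.ne'
  have step1 : ∀ m ∈ Finset.range q, γ (m : ℤ) * Complex.exp (cc * (t:ℂ) * (m:ℂ) / (q:ℂ))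
      = ∑ k ∈ Finset.range q, ((1:ℂ)/(2*q)) * ff p q k *
          (Complex.exp (cc * ((((k:ℤ) + t : ℤ)):ℂ) * (m:ℂ) / (q:ℂ))
            + Complex.exp (cc * (((t - (k:ℤ) : ℤ)):ℂ) * (m:ℂ) / (q:ℂ))) := by
    intro m _
    rw [hγ (m:ℤ), Finset.mul_sum, Finset.sum_mul]
    apply Finset.sum_congr rfl
    intro k _
    have e1 : Complex.exp (-2 * (Real.pi : ℂ) * Complex.I * (k : ℂ)^2 * (p : ℂ) / (q : ℂ))
        = ff p q (k:ℤ) := by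
      rw [ff]; congr 1; rw [cc]; push_cast; ring
    have hcos : ((Real.cos (2 * Real.pi * (((m:ℤ)) : ℝ) * ((k:ℕ) : ℝ) / ((q:ℕ) : ℝ)) : ℝ) : ℂ)
        = (Complex.exp (((2 * Real.pi * (((m:ℤ)) : ℝ) * ((k:ℕ) : ℝ) / ((q:ℕ) : ℝ) : ℝ) : ℂ) * Complex.I)
          + Complex.exp (-(((2 * Real.pi * (((m:ℤ)) : ℝ) * ((k:ℕ) : ℝ) / ((q:ℕ) : ℝ) : ℝ) : ℂ)) * Complex.I)) / 2 := by
      rw [Complex.ofReal_cos, Complex.cos]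
    have e2 : Complex.exp (((2 * Real.pi * (((m:ℤ)) : ℝ) * ((k:ℕ) : ℝ) / ((q:ℕ) : ℝ) : ℝ) : ℂ) * Complex.I)
          * Complex.exp (cc * (t:ℂ) * (m:ℂ) / (q:ℂ))
        = Complex.exp (cc * ((((k:ℤ) + t : ℤ)):ℂ) * (m:ℂ) / (q:ℂ)) := by
      rw [← Complex.exp_add]; congr 1; rw [cc]; push_cast; ring
    have e3 : Complex.exp (-(((2 * Real.pi * (((m:ℤ)) : ℝ) * ((k:ℕ) : ℝ) / ((q:ℕ) : ℝ) : ℝ) : ℂ)) * Complex.I)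
          * Complex.exp (cc * (t:ℂ) * (m:ℂ) / (q:ℂ))
        = Complex.exp (cc * (((t - (k:ℤ) : ℤ)):ℂ) * (m:ℂ) / (q:ℂ)) := by
      rw [← Complex.exp_add]; congr 1; rw [cc]; push_cast; ring
    rw [e1, hcos]
    linear_combination ((1:ℂ)/(2*q)) * ff p q (k:ℤ) * e2 + ((1:ℂ)/(2*q)) * ff p q (k:ℤ) * e3
  rw [Finset.sum_congr rfl step1, Finset.sum_comm]
  have step2 : ∀ k ∈ Finset.range q,
      ∑ m ∈ Finset.range q, ((1:ℂ)/(2*q)) * ff p q k *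
          (Complex.exp (cc * ((((k:ℤ) + t : ℤ)):ℂ) * (m:ℂ) / (q:ℂ))
            + Complex.exp (cc * (((t - (k:ℤ) : ℤ)):ℂ) * (m:ℂ) / (q:ℂ)))
      = ((1:ℂ)/(2*q)) * (ff p q k * (if (q:ℤ) ∣ ((k:ℤ) - (-t)) then (q:ℂ) else 0)
          + ff p q k * (if (q:ℤ) ∣ ((k:ℤ) - t) then (q:ℂ) else 0)) := by
    intro k _
    rw [← Finset.mul_sum, Finset.sum_add_distrib, geom_lemma q hq ((k:ℤ) + t),
      geom_lemma q hq (t - (k:ℤ))]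
    have d1 : (if (q:ℤ) ∣ ((k:ℤ) + t) then (q:ℂ) else 0)
        = (if (q:ℤ) ∣ ((k:ℤ) - (-t)) then (q:ℂ) else 0) := by rw [sub_neg_eq_add]
    have d2 : (if (q:ℤ) ∣ (t - (k:ℤ)) then (q:ℂ) else 0)
        = (if (q:ℤ) ∣ ((k:ℤ) - t) then (q:ℂ) else 0) := if_congr dvd_sub_comm rfl rfl
    rw [d1, d2]; ring
  rw [Finset.sum_congr rfl step2]
  rw [← Finset.mul_sum, Finset.sum_add_distrib,
    pick_lemma q hq (ff p q) (fun a b h => ff_periodic p q hq h) (-t),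
    pick_lemma q hq (ff p q) (fun a b h => ff_periodic p q hq h) t,
    ff_even]
  field_simp
  ring

lemma phase_lemma (p q : ℕ) (hq : 0 < q) (γ : ℤ → ℂ)
    (hγ : ∀ n : ℤ, γ n = (1 / (q : ℂ)) * ∑ m ∈ Finset.range q,
      Complex.exp (-2 * (Real.pi : ℂ) * Complex.I * (m : ℂ)^2 * (p : ℂ) / (q : ℂ))
        * ((Real.cos (2 * Real.pi * (n : ℝ) * (m : ℝ) / (q : ℝ)) : ℝ) : ℂ))
    (n : ℕ) (x : ℝ) :
    ∑ m ∈ Finset.range q, γ (m : ℤ) *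
        Complex.sin ((n : ℂ) * (Real.pi : ℂ) * ((x + 2 * m / q : ℝ) : ℂ))
      = ff p q (n : ℤ) * Complex.sin ((n : ℂ) * (Real.pi : ℂ) * (x : ℂ)) := by
  have C1 := Clem p q hq γ hγ (n : ℤ)
  have C2 := Clem p q hq γ hγ (-(n : ℤ))
  rw [ff_even] at C2
  push_cast at C1 C2
  have key : ∀ m ∈ Finset.range q, γ (m : ℤ) *
        Complex.sin ((n : ℂ) * (Real.pi : ℂ) * ((x + 2 * m / q : ℝ) : ℂ))
      = (Complex.exp (-((n : ℂ) * (Real.pi : ℂ) * (x : ℂ)) * Complex.I) * Complex.I / 2)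
          * (γ (m : ℤ) * Complex.exp (cc * (-(n:ℂ)) * (m:ℂ) / (q:ℂ)))
        + (-(Complex.exp (((n : ℂ) * (Real.pi : ℂ) * (x : ℂ)) * Complex.I) * Complex.I / 2))
          * (γ (m : ℤ) * Complex.exp (cc * (n:ℂ) * (m:ℂ) / (q:ℂ))) := by
    intro m _
    have s1 : Complex.exp (-((n : ℂ) * (Real.pi : ℂ) * ((x + 2 * m / q : ℝ) : ℂ)) * Complex.I)
        = Complex.exp (-((n : ℂ) * (Real.pi : ℂ) * (x : ℂ)) * Complex.I)
          * Complex.exp (cc * (-(n:ℂ)) * (m:ℂ) / (q:ℂ)) := by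
      rw [← Complex.exp_add]; congr 1; rw [cc]; push_cast; ring
    have s2 : Complex.exp (((n : ℂ) * (Real.pi : ℂ) * ((x + 2 * m / q : ℝ) : ℂ)) * Complex.I)
        = Complex.exp (((n : ℂ) * (Real.pi : ℂ) * (x : ℂ)) * Complex.I)
          * Complex.exp (cc * (n:ℂ) * (m:ℂ) / (q:ℂ)) := by
      rw [← Complex.exp_add]; congr 1; rw [cc]; push_cast; ring
    rw [Complex.sin, s1, s2]; ring
  rw [Finset.sum_congr rfl key, Finset.sum_add_distrib, ← Finset.mul_sum, ← Finset.mul_sum,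
    C1, C2, Complex.sin]
  ring
end FloquetAux

/-- Core identity of the simplified first-half Floquet operator of the
`(p,q)`-resonant quantum piecewise linear Fermi–Ulam accelerator: the resonant
phases `exp(−2πin²p/q)` act on a sine series as a finite linear combination,
with coefficients `γ_n`, of the translates `φ(x + 2n/q)` of the odd 2-periodic
extension `φ` of the wave. -/
theorem resonant_floquet_identity
    (p q : ℕ) (hp : 0 < p) (hq : 0 < q) (hpq : Nat.Coprime p q)
    (γ : ℤ → ℂ)
    (hγ : ∀ n : ℤ, γ n = (1 / (q : ℂ)) * ∑ m ∈ Finset.range q,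
      Complex.exp (-2 * (Real.pi : ℂ) * Complex.I * (m : ℂ)^2 * (p : ℂ) / (q : ℂ))
        * ((Real.cos (2 * Real.pi * (n : ℝ) * (m : ℝ) / (q : ℝ)) : ℝ) : ℂ))
    (A : ℕ → ℂ) (hA : (Function.support A).Finite) (hA₀ : A 0 = 0)
    (φ : ℝ → ℂ)
    (hφ : ∀ x : ℝ, φ x = ∑ᶠ n : ℕ, A n * Complex.sin ((n : ℂ) * (Real.pi : ℂ) * (x : ℂ)))
    (x : ℝ) :
    ∑ᶠ n : ℕ, Complex.exp (-2 * (Real.pi : ℂ) * Complex.I * (n : ℂ)^2 * (p : ℂ) / (q : ℂ))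
        * A n * Complex.sin ((n : ℂ) * (Real.pi : ℂ) * (x : ℂ))
      = ∑ n ∈ Finset.range q, γ (n : ℤ) * φ (x + 2 * n / q) := by
  classical
  set s : Finset ℕ := hA.toFinset with hs
  have hmem : ∀ n : ℕ, A n ≠ 0 → n ∈ s := by
    intro n hn; simp [hs, Set.Finite.mem_toFinset, Function.mem_support, hn]
  have hL : ∑ᶠ n : ℕ, Complex.exp (-2 * (Real.pi : ℂ) * Complex.I * (n : ℂ)^2 * (p : ℂ) / (q : ℂ))
        * A n * Complex.sin ((n : ℂ) * (Real.pi : ℂ) * (x : ℂ))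
      = ∑ n ∈ s, Complex.exp (-2 * (Real.pi : ℂ) * Complex.I * (n : ℂ)^2 * (p : ℂ) / (q : ℂ))
        * A n * Complex.sin ((n : ℂ) * (Real.pi : ℂ) * (x : ℂ)) := by
    apply finsum_eq_sum_of_support_subset
    intro n hn
    by_contra hns
    have hA0 : A n = 0 := by
      by_contra h; exact hns (hmem n h)
    simp [Function.mem_support, hA0] at hn
  have hΦ : ∀ y : ℝ, φ y = ∑ n ∈ s, A n * Complex.sin ((n : ℂ) * (Real.pi : ℂ) * (y : ℂ)) := by
    intro y
    rw [hφ y]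
    apply finsum_eq_sum_of_support_subset
    intro n hn
    by_contra hns
    have hA0 : A n = 0 := by
      by_contra h; exact hns (hmem n h)
    simp [Function.mem_support, hA0] at hn
  rw [hL]
  have h0 : ∀ m ∈ Finset.range q, γ (m : ℤ) * φ (x + 2 * m / q)
      = ∑ n ∈ s, γ (m : ℤ) *
          (A n * Complex.sin ((n : ℂ) * (Real.pi : ℂ) * ((x + 2 * m / q : ℝ) : ℂ))) := by
    intro m _; rw [hΦ (x + 2 * m / q), Finset.mul_sum]
  rw [Finset.sum_congr rfl h0, Finset.sum_comm]
  apply Finset.sum_congr rfl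
  intro n _
  have h1 : ∀ m ∈ Finset.range q,
      γ (m : ℤ) * (A n * Complex.sin ((n : ℂ) * (Real.pi : ℂ) * ((x + 2 * m / q : ℝ) : ℂ)))
      = A n * (γ (m : ℤ) * Complex.sin ((n : ℂ) * (Real.pi : ℂ) * ((x + 2 * m / q : ℝ) : ℂ))) := by
    intro m _; ring
  rw [Finset.sum_congr rfl h1, ← Finset.mul_sum, phase_lemma p q hq γ hγ n x]
  have e1 : Complex.exp (-2 * (Real.pi : ℂ) * Complex.I * (n : ℂ)^2 * (p : ℂ) / (q : ℂ))
      = ff p q (n : ℤ) := by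
    rw [ff]; congr 1; rw [cc]; push_cast; ring
  rw [e1]; ring
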